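/- Let β > 1/2, assume (ln m_ξ)'' = O(ξ^{−β}) as ξ → ∞, and set σ = max{1/2, 1/β}. Then there is a constant C_μ > 0 such that for every a ∈ Fℓ²_σ the operator K_μ(a) is Hilbert–Schmidt on ℓ²(ℤ≥0); explicitly, Σ_{j,k≥0} |a_{j−k}|² (1 − ρ_{j,k})² ≤ C_μ² ‖a‖²_{Fℓ²_σ}, the left side being the squared Hilbert–Schmidt norm of K_μ(a). -/

import Mathlib

open MeasureTheory Filter Complex Asymptotics Topology

noncomputable section

instance : Fact (0 < 2 * Real.pi) := ⟨by positivity⟩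

/-- The moment function `m_ξ = ∫_0^∞ r^ξ dμ(r)`. -/
def mom (μ : Measure ℝ) (ξ : ℝ) : ℝ := ∫ r in Set.Ioi (0:ℝ), r ^ ξ ∂μ

/-- `ρ_{j,k} = m_{j+k} / (m_{2j} m_{2k})^{1/2}`. -/
def rho (μ : Measure ℝ) (j k : ℕ) : ℝ :=
  mom μ ((j : ℝ) + (k : ℝ)) / Real.sqrt (mom μ (2 * (j : ℝ)) * mom μ (2 * (k : ℝ)))

lemma mom_pos (μ : Measure ℝ) (hpos : μ (Set.Ioi (0:ℝ)) ≠ 0)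
    (hmom : ∀ ξ : ℝ, 0 ≤ ξ → IntegrableOn (fun r : ℝ => r ^ ξ) (Set.Ioi (0:ℝ)) μ)
    {ξ : ℝ} (hξ : 0 ≤ ξ) : 0 < mom μ ξ := by
  rw [mom]
  rw [setIntegral_pos_iff_support_of_nonneg_ae ?_ (hmom ξ hξ)]
  · have : Function.support (fun r : ℝ => r ^ ξ) ∩ Set.Ioi 0 = Set.Ioi 0 := by
      apply Set.inter_eq_right.2
      intro r hr
      exact (Real.rpow_pos_of_pos hr ξ).ne'
    rw [this]
    exact hpos.bot_lt
  · filter_upwards [ae_restrict_mem measurableSet_Ioi] with r hr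
    exact (Real.rpow_pos_of_pos hr ξ).le

lemma mom_cs (μ : Measure ℝ)
    (hmom : ∀ ξ : ℝ, 0 ≤ ξ → IntegrableOn (fun r : ℝ => r ^ ξ) (Set.Ioi (0:ℝ)) μ)
    {x y : ℝ} (hx : 0 ≤ x) (hy : 0 ≤ y) :
    (mom μ (x + y))^2 ≤ mom μ (2*x) * mom μ (2*y) := by
  have key : ∀ t : ℝ, 0 ≤ mom μ (2*x) - 2*t*(mom μ (x+y)) + t^2 * mom μ (2*y) := by
    intro t
    have h1 : IntegrableOn (fun r : ℝ => r ^ (2*x)) (Set.Ioi (0:ℝ)) μ := hmom _ (by linarith)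
    have h2 : IntegrableOn (fun r : ℝ => r ^ (x+y)) (Set.Ioi (0:ℝ)) μ := hmom _ (by linarith)
    have h3 : IntegrableOn (fun r : ℝ => r ^ (2*y)) (Set.Ioi (0:ℝ)) μ := hmom _ (by linarith)
    have hnn : 0 ≤ ∫ r in Set.Ioi (0:ℝ),
        (r ^ (2*x) - 2*t*r^(x+y) + t^2 * r^(2*y)) ∂μ := by
      apply setIntegral_nonneg measurableSet_Ioi
      intro r hr
      have : r ^ (2*x) - 2*t*r^(x+y) + t^2 * r^(2*y) = (r^x - t*r^y)^2 := by
        have e1 : r ^ (2*x) = r^x * r^x := by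
          rw [two_mul, Real.rpow_add hr]
        have e2 : r ^ (x+y) = r^x * r^y := Real.rpow_add hr x y
        have e3 : r ^ (2*y) = r^y * r^y := by
          rw [two_mul, Real.rpow_add hr]
        rw [e1, e2, e3]; ring
      rw [this]
      positivity
    have hA : IntegrableOn (fun r : ℝ => r ^ (2*x) - 2*t*r^(x+y)) (Set.Ioi (0:ℝ)) μ :=
      h1.sub (h2.const_mul _)
    have heq : (∫ r in Set.Ioi (0:ℝ), (r ^ (2*x) - 2*t*r^(x+y) + t^2 * r^(2*y)) ∂μ)
        = mom μ (2*x) - 2*t*(mom μ (x+y)) + t^2 * mom μ (2*y) := by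
      rw [integral_add hA (h3.const_mul _), integral_sub h1 (h2.const_mul _),
        integral_const_mul, integral_const_mul]
      rfl
    rw [heq] at hnn
    exact hnn
  have hmnn : 0 ≤ mom μ (x+y) := by
    apply setIntegral_nonneg measurableSet_Ioi
    intro r hr; exact Real.rpow_nonneg (le_of_lt hr) _
  have hynn : 0 ≤ mom μ (2*y) := by
    apply setIntegral_nonneg measurableSet_Ioi
    intro r hr; exact Real.rpow_nonneg (le_of_lt hr) _
  by_cases hy0 : mom μ (2*y) = 0
  · by_cases hxy : mom μ (x+y) = 0
    · simp [hxy, hy0]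
    · exfalso
      have hxyp : 0 < mom μ (x+y) := lt_of_le_of_ne hmnn (Ne.symm hxy)
      have h1 := key ((mom μ (2*x) + 1) / (2 * mom μ (x+y)))
      rw [hy0] at h1
      have he : 2*((mom μ (2*x) + 1) / (2 * mom μ (x+y)))*(mom μ (x+y))
          = mom μ (2*x) + 1 := by field_simp
      rw [he] at h1
      linarith
  · have hyp : 0 < mom μ (2*y) := lt_of_le_of_ne hynn (Ne.symm hy0)
    have h := key (mom μ (x+y) / mom μ (2*y))
    have h2' : 0 ≤ (mom μ (2*x) - 2*(mom μ (x+y) / mom μ (2*y))*(mom μ (x+y))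
        + (mom μ (x+y) / mom μ (2*y))^2 * mom μ (2*y)) * mom μ (2*y) :=
      mul_nonneg h hyp.le
    have h3' : (mom μ (2*x) - 2*(mom μ (x+y) / mom μ (2*y))*(mom μ (x+y))
        + (mom μ (x+y) / mom μ (2*y))^2 * mom μ (2*y)) * mom μ (2*y)
        = mom μ (2*x) * mom μ (2*y) - (mom μ (x+y))^2 := by
      field_simp
      ring
    rw [h3'] at h2'
    linarith

lemma rho_pos (μ : Measure ℝ) (hpos : μ (Set.Ioi (0:ℝ)) ≠ 0)
    (hmom : ∀ ξ : ℝ, 0 ≤ ξ → IntegrableOn (fun r : ℝ => r ^ ξ) (Set.Ioi (0:ℝ)) μ)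
    (j k : ℕ) : 0 < rho μ j k := by
  have h1 : 0 < mom μ ((j:ℝ)+(k:ℝ)) := mom_pos μ hpos hmom (by positivity)
  have h2 : 0 < mom μ (2*(j:ℝ)) := mom_pos μ hpos hmom (by positivity)
  have h3 : 0 < mom μ (2*(k:ℝ)) := mom_pos μ hpos hmom (by positivity)
  exact div_pos h1 (Real.sqrt_pos.2 (mul_pos h2 h3))

lemma rho_le_one (μ : Measure ℝ) (hpos : μ (Set.Ioi (0:ℝ)) ≠ 0)
    (hmom : ∀ ξ : ℝ, 0 ≤ ξ → IntegrableOn (fun r : ℝ => r ^ ξ) (Set.Ioi (0:ℝ)) μ)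
    (j k : ℕ) : rho μ j k ≤ 1 := by
  have h1 : 0 < mom μ ((j:ℝ)+(k:ℝ)) := mom_pos μ hpos hmom (by positivity)
  have h2 : 0 < mom μ (2*(j:ℝ)) := mom_pos μ hpos hmom (by positivity)
  have h3 : 0 < mom μ (2*(k:ℝ)) := mom_pos μ hpos hmom (by positivity)
  rw [rho, div_le_one (Real.sqrt_pos.2 (mul_pos h2 h3))]
  calc mom μ ((j:ℝ)+(k:ℝ)) = Real.sqrt ((mom μ ((j:ℝ)+(k:ℝ)))^2) := (Real.sqrt_sq h1.le).symm
    _ ≤ Real.sqrt (mom μ (2*(j:ℝ)) * mom μ (2*(k:ℝ))) :=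
        Real.sqrt_le_sqrt (mom_cs μ hmom (by positivity) (by positivity))

def momL (μ : Measure ℝ) (ξ : ℝ) : ℝ := ∫ r in Set.Ioi (0:ℝ), r ^ ξ * Real.log r ∂μ

def momLL (μ : Measure ℝ) (ξ : ℝ) : ℝ := ∫ r in Set.Ioi (0:ℝ), r ^ ξ * (Real.log r)^2 ∂μ

lemma log_abs_le (r : ℝ) (hr : 0 < r) : |Real.log r| ≤ r + r⁻¹ := by
  rcases le_or_gt 1 r with h | h
  · rw [_root_.abs_of_nonneg (Real.log_nonneg h)]
    have := Real.log_le_sub_one_of_pos hr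
    have : 0 < r⁻¹ := by positivity
    linarith [Real.log_le_sub_one_of_pos hr]
  · rw [_root_.abs_of_nonpos (Real.log_nonpos hr.le h.le)]
    have h2 : Real.log r⁻¹ ≤ r⁻¹ - 1 := Real.log_le_sub_one_of_pos (by positivity)
    rw [Real.log_inv] at h2
    linarith

lemma rpow_mul_log_bound {r x ξ₀ : ℝ} (hr : 0 < r) (hx : |x - ξ₀| ≤ 1/2) (hξ : 3 ≤ ξ₀) :
    |r ^ x * Real.log r| ≤ r ^ (ξ₀ - 3/2) + r ^ (ξ₀ + 3/2) := by
  rw [abs_mul, _root_.abs_of_nonneg (Real.rpow_nonneg hr.le x)]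
  rcases le_or_gt 1 r with h | h
  · have h1 : r ^ x ≤ r ^ (ξ₀ + 1/2) := Real.rpow_le_rpow_of_exponent_le h (by
      rcases abs_le.1 hx with ⟨_, h'⟩; linarith)
    have h2 : |Real.log r| ≤ r := by
      rw [_root_.abs_of_nonneg (Real.log_nonneg h)]
      linarith [Real.log_le_sub_one_of_pos hr]
    calc r ^ x * |Real.log r| ≤ r ^ (ξ₀ + 1/2) * r :=
          mul_le_mul h1 h2 (abs_nonneg _) (Real.rpow_nonneg hr.le _)
      _ = r ^ (ξ₀ + 3/2) := by
          nth_rewrite 2 [← Real.rpow_one r]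
          rw [← Real.rpow_add hr]
          norm_num
          ring_nf
      _ ≤ r ^ (ξ₀ - 3/2) + r ^ (ξ₀ + 3/2) := by
          have : 0 ≤ r ^ (ξ₀ - 3/2) := Real.rpow_nonneg hr.le _
          linarith
  · have h1 : r ^ x ≤ r ^ (ξ₀ - 1/2) := Real.rpow_le_rpow_of_exponent_ge hr h.le (by
      rcases abs_le.1 hx with ⟨h', _⟩; linarith)
    have h2 : |Real.log r| ≤ r⁻¹ := by
      rw [_root_.abs_of_nonpos (Real.log_nonpos hr.le h.le)]
      have h3 : Real.log r⁻¹ ≤ r⁻¹ - 1 := Real.log_le_sub_one_of_pos (by positivity)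
      rw [Real.log_inv] at h3
      linarith
    calc r ^ x * |Real.log r| ≤ r ^ (ξ₀ - 1/2) * r⁻¹ :=
          mul_le_mul h1 h2 (abs_nonneg _) (Real.rpow_nonneg hr.le _)
      _ = r ^ (ξ₀ - 3/2) := by
          rw [← Real.rpow_neg_one r, ← Real.rpow_add hr]
          norm_num
          ring_nf
      _ ≤ r ^ (ξ₀ - 3/2) + r ^ (ξ₀ + 3/2) := by
          have : 0 ≤ r ^ (ξ₀ + 3/2) := Real.rpow_nonneg hr.le _
          linarith

lemma hasDerivAt_rpow_exp {r : ℝ} (hr : 0 < r) (x : ℝ) :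
    HasDerivAt (fun x : ℝ => r ^ x) (r ^ x * Real.log r) x := by
  have : (fun x : ℝ => r ^ x) = fun x => Real.exp (Real.log r * x) := by
    funext y
    rw [Real.rpow_def_of_pos hr]
  rw [this]
  have h := ((hasDerivAt_id x).const_mul (Real.log r)).exp
  simpa [Real.rpow_def_of_pos hr, mul_comm] using h

lemma mom_hasDeriv (μ : Measure ℝ)
    (hmom : ∀ ξ : ℝ, 0 ≤ ξ → IntegrableOn (fun r : ℝ => r ^ ξ) (Set.Ioi (0:ℝ)) μ)
    {ξ₀ : ℝ} (hξ : 3 ≤ ξ₀) :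
    IntegrableOn (fun r : ℝ => r ^ ξ₀ * Real.log r) (Set.Ioi (0:ℝ)) μ ∧
      HasDerivAt (mom μ) (momL μ ξ₀) ξ₀ := by
  have key := hasDerivAt_integral_of_dominated_loc_of_deriv_le
    (μ := μ.restrict (Set.Ioi (0:ℝ))) (x₀ := ξ₀)
    (F := fun x r => r ^ x) (F' := fun x r => r ^ x * Real.log r)
    (bound := fun r => r ^ (ξ₀ - 3/2) + r ^ (ξ₀ + 3/2))
    (s := Metric.ball ξ₀ (1/2)) (Metric.ball_mem_nhds _ (by norm_num))
    ((eventually_ge_nhds (show (0:ℝ) < ξ₀ by linarith)).mono fun x hx =>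
      (Real.continuous_rpow_const hx).aestronglyMeasurable)
    (hmom ξ₀ (by linarith))
    (((Real.continuous_rpow_const (by linarith : (0:ℝ) ≤ ξ₀)).measurable.mul
      Real.measurable_log).aestronglyMeasurable)
    ?_ ((hmom _ (by linarith)).add (hmom _ (by linarith))) ?_
  · exact key
  · filter_upwards [ae_restrict_mem measurableSet_Ioi] with r hr x hx
    exact rpow_mul_log_bound hr (by rw [Metric.mem_ball, Real.dist_eq] at hx; linarith [hx.le]) hξ
  · filter_upwards [ae_restrict_mem measurableSet_Ioi] with r hr x _
    exact hasDerivAt_rpow_exp hr x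
lemma rpow_mul_log_sq_bound {r x ξ₀ : ℝ} (hr : 0 < r) (hx : |x - ξ₀| ≤ 1/2) (hξ : 3 ≤ ξ₀) :
    |r ^ x * (Real.log r)^2| ≤ r ^ (ξ₀ - 5/2) + r ^ (ξ₀ + 5/2) := by
  rw [abs_mul, _root_.abs_of_nonneg (Real.rpow_nonneg hr.le x), _root_.abs_pow]
  rcases le_or_gt 1 r with h | h
  · have h1 : r ^ x ≤ r ^ (ξ₀ + 1/2) := Real.rpow_le_rpow_of_exponent_le h (by
      rcases abs_le.1 hx with ⟨_, h'⟩; linarith)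
    have h2 : |Real.log r| ≤ r := by
      rw [_root_.abs_of_nonneg (Real.log_nonneg h)]
      linarith [Real.log_le_sub_one_of_pos hr]
    have h2' : |Real.log r|^2 ≤ r^2 := by
      apply pow_le_pow_left₀ (abs_nonneg _) h2
    calc r ^ x * |Real.log r|^2 ≤ r ^ (ξ₀ + 1/2) * r^2 :=
          mul_le_mul h1 h2' (by positivity) (Real.rpow_nonneg hr.le _)
      _ = r ^ (ξ₀ + 5/2) := by
          rw [← Real.rpow_natCast r 2, ← Real.rpow_add hr]
          norm_num
          ring_nf
      _ ≤ r ^ (ξ₀ - 5/2) + r ^ (ξ₀ + 5/2) := by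
          have : 0 ≤ r ^ (ξ₀ - 5/2) := Real.rpow_nonneg hr.le _
          linarith
  · have h1 : r ^ x ≤ r ^ (ξ₀ - 1/2) := Real.rpow_le_rpow_of_exponent_ge hr h.le (by
      rcases abs_le.1 hx with ⟨h', _⟩; linarith)
    have h2 : |Real.log r| ≤ r⁻¹ := by
      rw [_root_.abs_of_nonpos (Real.log_nonpos hr.le h.le)]
      have h3 : Real.log r⁻¹ ≤ r⁻¹ - 1 := Real.log_le_sub_one_of_pos (by positivity)
      rw [Real.log_inv] at h3
      linarith
    have h2' : |Real.log r|^2 ≤ (r⁻¹)^2 := pow_le_pow_left₀ (abs_nonneg _) h2 2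
    calc r ^ x * |Real.log r|^2 ≤ r ^ (ξ₀ - 1/2) * (r⁻¹)^2 :=
          mul_le_mul h1 h2' (by positivity) (Real.rpow_nonneg hr.le _)
      _ = r ^ (ξ₀ - 5/2) := by
          rw [← Real.rpow_neg_one r, ← Real.rpow_natCast (r^(-1:ℝ)) 2,
            ← Real.rpow_mul hr.le, ← Real.rpow_add hr]
          norm_num
          ring_nf
      _ ≤ r ^ (ξ₀ - 5/2) + r ^ (ξ₀ + 5/2) := by
          have : 0 ≤ r ^ (ξ₀ + 5/2) := Real.rpow_nonneg hr.le _
          linarith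

lemma momL_hasDeriv (μ : Measure ℝ)
    (hmom : ∀ ξ : ℝ, 0 ≤ ξ → IntegrableOn (fun r : ℝ => r ^ ξ) (Set.Ioi (0:ℝ)) μ)
    {ξ₀ : ℝ} (hξ : 3 ≤ ξ₀) :
    HasDerivAt (momL μ) (momLL μ ξ₀) ξ₀ := by
  have key := hasDerivAt_integral_of_dominated_loc_of_deriv_le
    (μ := μ.restrict (Set.Ioi (0:ℝ))) (x₀ := ξ₀)
    (F := fun x r => r ^ x * Real.log r) (F' := fun x r => r ^ x * (Real.log r)^2)
    (bound := fun r => r ^ (ξ₀ - 5/2) + r ^ (ξ₀ + 5/2))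
    (s := Metric.ball ξ₀ (1/2)) (Metric.ball_mem_nhds _ (by norm_num))
    ((eventually_ge_nhds (show (0:ℝ) < ξ₀ by linarith)).mono fun x hx =>
      ((Real.continuous_rpow_const hx).measurable.mul Real.measurable_log).aestronglyMeasurable)
    ((mom_hasDeriv μ hmom hξ).1)
    (((Real.continuous_rpow_const (by linarith : (0:ℝ) ≤ ξ₀)).measurable.mul
      (Real.measurable_log.pow_const 2)).aestronglyMeasurable)
    ?_ ((hmom _ (by linarith)).add (hmom _ (by linarith))) ?_
  · exact key.2
  · filter_upwards [ae_restrict_mem measurableSet_Ioi] with r hr x hx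
    exact rpow_mul_log_sq_bound hr (by rw [Metric.mem_ball, Real.dist_eq] at hx; linarith [hx.le]) hξ
  · filter_upwards [ae_restrict_mem measurableSet_Ioi] with r hr x _
    have h := (hasDerivAt_rpow_exp hr x).mul_const (Real.log r)
    exact h.congr_deriv (by ring)
lemma L_hasDeriv (μ : Measure ℝ) (hpos : μ (Set.Ioi (0:ℝ)) ≠ 0)
    (hmom : ∀ ξ : ℝ, 0 ≤ ξ → IntegrableOn (fun r : ℝ => r ^ ξ) (Set.Ioi (0:ℝ)) μ)
    {ξ : ℝ} (hξ : 3 < ξ) :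
    HasDerivAt (fun t => Real.log (mom μ t)) (deriv (fun t => Real.log (mom μ t)) ξ) ξ ∧
    HasDerivAt (deriv (fun t => Real.log (mom μ t)))
      (deriv (deriv (fun t => Real.log (mom μ t))) ξ) ξ := by
  set L := fun t => Real.log (mom μ t) with hL
  have hG : ∀ x : ℝ, 3 ≤ x → HasDerivAt L (momL μ x / mom μ x) x := fun x hx =>
    ((mom_hasDeriv μ hmom hx).2).log (mom_pos μ hpos hmom (by linarith)).ne'
  have h1 : HasDerivAt L (deriv L ξ) ξ := ((hG ξ hξ.le).differentiableAt).hasDerivAt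
  have hEq : deriv L =ᶠ[𝓝 ξ] (fun x => momL μ x / mom μ x) := by
    filter_upwards [isOpen_Ioi.mem_nhds hξ] with x hx
    exact (hG x (le_of_lt hx)).deriv
  have hGd : HasDerivAt (fun x => momL μ x / mom μ x)
      ((momLL μ ξ * mom μ ξ - momL μ ξ * momL μ ξ) / (mom μ ξ)^2) ξ :=
    (momL_hasDeriv μ hmom hξ.le).div ((mom_hasDeriv μ hmom hξ.le).2)
      (mom_pos μ hpos hmom (by linarith)).ne'
  have h2 : HasDerivAt (deriv L) _ ξ := hGd.congr_of_eventuallyEq hEq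
  exact ⟨h1, (h2.differentiableAt).hasDerivAt⟩
lemma midpoint_est {f f' f'' : ℝ → ℝ} {a b M : ℝ} (hab : a ≤ b) (hM0 : 0 ≤ M)
    (hf : ∀ x ∈ Set.Icc a b, HasDerivAt f (f' x) x)
    (hf' : ∀ x ∈ Set.Icc a b, HasDerivAt f' (f'' x) x)
    (hM : ∀ x ∈ Set.Icc a b, |f'' x| ≤ M) :
    |f a + f b - 2 * f ((a+b)/2)| ≤ 2 * M * ((b-a)/2)^2 := by
  set c := (a+b)/2 with hc
  set h := (b-a)/2 with hh
  have hh0 : 0 ≤ h := by rw [hh]; linarith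
  have stepA : ∀ x ∈ Set.Icc a b, ∀ y ∈ Set.Icc a b, |f' y - f' x| ≤ M * |y - x| := by
    intro x hx y hy
    have := Convex.norm_image_sub_le_of_norm_hasDerivWithin_le
      (f := f') (f' := f'') (s := Set.Icc a b)
      (fun z hz => (hf' z hz).hasDerivWithinAt)
      (fun z hz => by simpa using hM z hz) (convex_Icc a b) hx hy
    simpa [Real.norm_eq_abs] using this
  -- F t = f (c + t) + f (c - t) on Icc 0 h
  set F : ℝ → ℝ := fun t => f (c + t) + f (c - t) with hF
  have hmem : ∀ t ∈ Set.Icc (0:ℝ) h, (c + t) ∈ Set.Icc a b ∧ (c - t) ∈ Set.Icc a b := by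
    intro t ht
    rcases ht with ⟨ht0, hth⟩
    constructor <;> constructor <;> (rw [hc] at *; rw [hh] at *) <;> linarith
  have hFd : ∀ t ∈ Set.Icc (0:ℝ) h, HasDerivAt F (f' (c + t) - f' (c - t)) t := by
    intro t ht
    rcases hmem t ht with ⟨h1, h2⟩
    have d1 : HasDerivAt (fun t => f (c + t)) (f' (c + t)) t := by
      have := (hf _ h1).comp t ((hasDerivAt_id t).const_add c)
      simpa [Function.comp_def] using this
    have d2 : HasDerivAt (fun t => f (c - t)) (-f' (c - t)) t := by
      have := (hf _ h2).comp t ((hasDerivAt_id t).neg.const_add c)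
      simpa [sub_eq_add_neg, Function.comp_def] using this
    exact (d1.add d2).congr_deriv (by ring)
  have hFb : ∀ t ∈ Set.Icc (0:ℝ) h, |f' (c + t) - f' (c - t)| ≤ 2 * M * h := by
    intro t ht
    rcases hmem t ht with ⟨h1, h2⟩
    have := stepA _ h2 _ h1
    have habs : |(c + t) - (c - t)| = 2 * t := by
      rw [show (c + t) - (c - t) = 2 * t by ring, _root_.abs_of_nonneg (by linarith [ht.1])]
    rw [habs] at this
    calc |f' (c + t) - f' (c - t)| ≤ M * (2 * t) := this
      _ ≤ 2 * M * h := by nlinarith [ht.1, ht.2]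
  have key := Convex.norm_image_sub_le_of_norm_hasDerivWithin_le
    (f := F) (f' := fun t => f' (c + t) - f' (c - t)) (s := Set.Icc (0:ℝ) h)
    (fun z hz => (hFd z hz).hasDerivWithinAt)
    (fun z hz => by simpa [Real.norm_eq_abs] using hFb z hz) (convex_Icc 0 h)
    (Set.left_mem_Icc.2 hh0) (Set.right_mem_Icc.2 hh0)
  have e1 : F h = f b + f a := by rw [hF]; simp only [hc, hh]; ring_nf
  have e2 : F 0 = 2 * f c := by rw [hF]; simp; ring
  rw [Real.norm_eq_abs, Real.norm_eq_abs, e1, e2, sub_zero, _root_.abs_of_nonneg hh0] at key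
  calc |f a + f b - 2 * f c| = |f b + f a - 2 * f c| := by ring_nf
    _ ≤ 2 * M * h * h := key
    _ = 2 * M * h ^ 2 := by ring
lemma one_sub_rho_le_aux (μ : Measure ℝ) (hpos : μ (Set.Ioi (0:ℝ)) ≠ 0)
    (hmom : ∀ ξ : ℝ, 0 ≤ ξ → IntegrableOn (fun r : ℝ => r ^ ξ) (Set.Ioi (0:ℝ)) μ)
    {β C₀ R : ℝ} (hC₀ : 0 ≤ C₀) (hR : 4 ≤ R) (hβpos : 0 < β)
    (hbound : ∀ ξ : ℝ, R ≤ ξ → |deriv (deriv (fun t => Real.log (mom μ t))) ξ| ≤ C₀ * ξ^(-β))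
    {j k : ℕ} (hkj : k ≤ j) (hjk : R ≤ 2 * (k:ℝ)) :
    1 - rho μ j k ≤ C₀ * ((j:ℝ) - (k:ℝ))^2 * ((k:ℝ))^(-β) := by
  set L := fun t => Real.log (mom μ t) with hLdef
  have hk2 : (2:ℝ) ≤ (k:ℝ) := by linarith
  have hkpos : (0:ℝ) < (k:ℝ) := by linarith
  have hab : 2*(k:ℝ) ≤ 2*(j:ℝ) := by
    have : (k:ℝ) ≤ (j:ℝ) := Nat.cast_le.2 hkj
    linarith
  have hmemR : ∀ x ∈ Set.Icc (2*(k:ℝ)) (2*(j:ℝ)), R ≤ x := fun x hx => le_trans hjk hx.1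
  have hmem3 : ∀ x ∈ Set.Icc (2*(k:ℝ)) (2*(j:ℝ)), (3:ℝ) < x := fun x hx => by
    have := hmemR x hx; linarith
  set M := C₀ * (2*(k:ℝ))^(-β) with hM
  have hM0 : 0 ≤ M := by
    apply mul_nonneg hC₀ (Real.rpow_nonneg (by linarith) _)
  have key := midpoint_est (f := L) (f' := deriv L) (f'' := deriv (deriv L)) hab hM0
    (fun x hx => (L_hasDeriv μ hpos hmom (hmem3 x hx)).1)
    (fun x hx => (L_hasDeriv μ hpos hmom (hmem3 x hx)).2)
    (fun x hx => by
      refine le_trans (hbound x (hmemR x hx)) ?_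
      apply mul_le_mul_of_nonneg_left _ hC₀
      exact Real.rpow_le_rpow_of_nonpos (by linarith) hx.1 (by linarith))
  rw [show (2*(k:ℝ)+2*(j:ℝ))/2 = (j:ℝ)+(k:ℝ) by ring,
      show (2*(j:ℝ)-2*(k:ℝ))/2 = (j:ℝ)-(k:ℝ) by ring] at key
  -- identify log rho
  have hmjk : 0 < mom μ ((j:ℝ)+(k:ℝ)) := mom_pos μ hpos hmom (by positivity)
  have hm2j : 0 < mom μ (2*(j:ℝ)) := mom_pos μ hpos hmom (by positivity)
  have hm2k : 0 < mom μ (2*(k:ℝ)) := mom_pos μ hpos hmom (by positivity)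
  have hlogrho : Real.log (rho μ j k)
      = L ((j:ℝ)+(k:ℝ)) - (L (2*(j:ℝ)) + L (2*(k:ℝ)))/2 := by
    rw [rho, Real.log_div hmjk.ne' (Real.sqrt_pos.2 (mul_pos hm2j hm2k)).ne',
      Real.log_sqrt (mul_pos hm2j hm2k).le, Real.log_mul hm2j.ne' hm2k.ne']
  have hrpos : 0 < rho μ j k := rho_pos μ hpos hmom j k
  have h1 : 1 - rho μ j k ≤ - Real.log (rho μ j k) := by
    have := Real.log_le_sub_one_of_pos hrpos
    linarith
  have h2 : - Real.log (rho μ j k) ≤ M * ((j:ℝ)-(k:ℝ))^2 := by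
    rw [hlogrho]
    have habs : L (2*(k:ℝ)) + L (2*(j:ℝ)) - 2 * L ((j:ℝ)+(k:ℝ)) ≤ 2*M*((j:ℝ)-(k:ℝ))^2 :=
      le_trans (le_abs_self _) key
    linarith
  have h3 : M * ((j:ℝ)-(k:ℝ))^2 ≤ C₀ * ((j:ℝ)-(k:ℝ))^2 * ((k:ℝ))^(-β) := by
    have hle : (2*(k:ℝ))^(-β) ≤ ((k:ℝ))^(-β) :=
      Real.rpow_le_rpow_of_nonpos hkpos (by linarith) (by linarith)
    calc M * ((j:ℝ)-(k:ℝ))^2 = (C₀ * ((j:ℝ)-(k:ℝ))^2) * (2*(k:ℝ))^(-β) := by rw [hM]; ring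
      _ ≤ (C₀ * ((j:ℝ)-(k:ℝ))^2) * ((k:ℝ))^(-β) :=
          mul_le_mul_of_nonneg_left hle (mul_nonneg hC₀ (sq_nonneg _))
      _ = C₀ * ((j:ℝ)-(k:ℝ))^2 * ((k:ℝ))^(-β) := by ring
  linarith

lemma one_sub_rho_le (μ : Measure ℝ) (hpos : μ (Set.Ioi (0:ℝ)) ≠ 0)
    (hmom : ∀ ξ : ℝ, 0 ≤ ξ → IntegrableOn (fun r : ℝ => r ^ ξ) (Set.Ioi (0:ℝ)) μ)
    {β C₀ R : ℝ} (hC₀ : 0 ≤ C₀) (hR : 4 ≤ R) (hβpos : 0 < β)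
    (hbound : ∀ ξ : ℝ, R ≤ ξ → |deriv (deriv (fun t => Real.log (mom μ t))) ξ| ≤ C₀ * ξ^(-β))
    {j k : ℕ} (hjk : R ≤ 2 * ((min j k : ℕ):ℝ)) :
    1 - rho μ j k ≤ C₀ * ((j:ℝ) - (k:ℝ))^2 * (((min j k : ℕ):ℝ))^(-β) := by
  rcases le_total k j with h | h
  · rw [min_eq_right (by exact_mod_cast h)] at *
    exact one_sub_rho_le_aux μ hpos hmom hC₀ hR hβpos hbound h hjk
  · rw [min_eq_left (by exact_mod_cast h)] at *
    have hsym : rho μ j k = rho μ k j := by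
      rw [rho, rho, mul_comm (mom μ (2*(j:ℝ))), add_comm ((j:ℝ))]
    rw [hsym, show ((j:ℝ) - (k:ℝ))^2 = ((k:ℝ) - (j:ℝ))^2 by ring]
    exact one_sub_rho_le_aux μ hpos hmom hC₀ hR hβpos hbound h hjk
lemma rpow_tail_step {p x : ℝ} (hp : 1 < p) (hx : 1 ≤ x) :
    (x+1)^(-p) ≤ (x^(1-p) - (x+1)^(1-p))/(p-1) := by
  have hx0 : (0:ℝ) < x := by linarith
  have hcont : ContinuousOn (fun t : ℝ => t^(1-p)) (Set.Icc x (x+1)) := by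
    intro t ht
    exact (Real.continuousAt_rpow_const t (1-p) (Or.inl (by linarith [ht.1] : t ≠ 0))).continuousWithinAt
  have hderiv : ∀ t ∈ Set.Ioo x (x+1), HasDerivAt (fun t : ℝ => t^(1-p)) ((1-p)*t^(-p)) t := by
    intro t ht
    have := Real.hasDerivAt_rpow_const (x := t) (p := 1-p) (Or.inl (by linarith [ht.1] : t ≠ 0))
    simpa [show (1-p)-1 = -p by ring] using this
  obtain ⟨c, hc, hcval⟩ := exists_hasDerivAt_eq_slope (fun t : ℝ => t^(1-p))
    (fun t => (1-p)*t^(-p)) (by linarith : x < x + 1) hcont hderiv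
  have hslope : (1-p)*c^(-p) = (x+1)^(1-p) - x^(1-p) := by
    rw [hcval]; field_simp; ring
  have hcp : (x+1)^(-p) ≤ c^(-p) :=
    Real.rpow_le_rpow_of_nonpos (by linarith [hc.1]) (by linarith [hc.2]) (by linarith)
  have : x^(1-p) - (x+1)^(1-p) = (p-1)*c^(-p) := by
    have : -((1-p)*c^(-p)) = -((x+1)^(1-p) - x^(1-p)) := by rw [hslope]
    linarith [this]
  rw [this, mul_div_cancel_left₀ _ (by linarith : p - 1 ≠ 0)]
  exact hcp

lemma rpow_tail_bound {p : ℝ} (hp : 1 < p) (M : ℕ) (hM : 1 ≤ M) :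
    Summable (fun i : ℕ => ((M:ℝ) + (i:ℝ))^(-p)) ∧
    (∑' i : ℕ, ((M:ℝ) + (i:ℝ))^(-p)) ≤ (1 + 1/(p-1)) * (M:ℝ)^(1-p) := by
  have hM1 : (1:ℝ) ≤ (M:ℝ) := by exact_mod_cast hM
  have hM0 : (0:ℝ) < (M:ℝ) := by linarith
  have inner : ∀ N : ℕ, ∑ i ∈ Finset.range N, ((M:ℝ) + 1 + (i:ℝ))^(-p)
      ≤ ((M:ℝ)^(1-p) - ((M:ℝ)+(N:ℝ))^(1-p))/(p-1) := by
    intro N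
    induction N with
    | zero => simp
    | succ N ih =>
      rw [Finset.sum_range_succ]
      push_cast
      have he : ((M:ℝ) + (N:ℝ) + 1) = (M:ℝ) + ((N:ℝ)+1) := by ring
      calc (∑ i ∈ Finset.range N, ((M:ℝ) + 1 + (i:ℝ))^(-p)) + ((M:ℝ)+1+(N:ℝ))^(-p)
          ≤ ((M:ℝ)^(1-p) - ((M:ℝ)+(N:ℝ))^(1-p))/(p-1)
            + (((M:ℝ)+(N:ℝ))^(1-p) - (((M:ℝ)+(N:ℝ))+1)^(1-p))/(p-1) := by
            refine add_le_add ih ?_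
            rw [show (M:ℝ)+1+(N:ℝ) = ((M:ℝ)+(N:ℝ))+1 by ring]
            exact rpow_tail_step hp (by linarith [Nat.cast_nonneg (α := ℝ) N])
        _ = ((M:ℝ)^(1-p) - ((M:ℝ)+((N:ℝ)+1))^(1-p))/(p-1) := by rw [← he]; ring
  have partial_bound : ∀ N : ℕ, ∑ i ∈ Finset.range N, ((M:ℝ) + (i:ℝ))^(-p)
      ≤ (1 + 1/(p-1)) * (M:ℝ)^(1-p) := by
    intro N
    have hMp : (M:ℝ)^(-p) ≤ (M:ℝ)^(1-p) :=
      Real.rpow_le_rpow_of_exponent_le hM1 (by linarith)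
    have htail_nonneg : (0:ℝ) ≤ (M:ℝ)^(1-p)/(p-1) := by
      apply div_nonneg (Real.rpow_nonneg hM0.le _) (by linarith)
    cases N with
    | zero =>
      simp only [Finset.sum_range_zero]
      have h1 : (0:ℝ) ≤ (M:ℝ)^(1-p) := Real.rpow_nonneg hM0.le _
      have hpd : (0:ℝ) < p - 1 := by linarith
      have h2 : (0:ℝ) ≤ 1/(p-1) := by positivity
      nlinarith
    | succ N =>
      rw [Finset.sum_range_succ']
      have h0 : ((M:ℝ) + ((0:ℕ):ℝ))^(-p) = (M:ℝ)^(-p) := by norm_num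
      have hsh : ∀ i : ℕ, ((M:ℝ) + ((i+1:ℕ):ℝ))^(-p) = ((M:ℝ) + 1 + (i:ℝ))^(-p) := by
        intro i; push_cast; ring_nf
      calc (∑ i ∈ Finset.range N, ((M:ℝ) + ((i+1:ℕ):ℝ))^(-p)) + ((M:ℝ) + ((0:ℕ):ℝ))^(-p)
          ≤ ((M:ℝ)^(1-p) - ((M:ℝ)+(N:ℝ))^(1-p))/(p-1) + (M:ℝ)^(1-p) := by
            refine add_le_add (le_trans (le_of_eq ?_) (inner N)) (by rw [h0]; exact hMp)
            exact Finset.sum_congr rfl fun i _ => hsh i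
        _ ≤ (M:ℝ)^(1-p)/(p-1) + (M:ℝ)^(1-p) := by
            have : (0:ℝ) ≤ ((M:ℝ)+(N:ℝ))^(1-p) := Real.rpow_nonneg (by positivity) _
            have hpd : (0:ℝ) < p - 1 := by linarith
            gcongr
            linarith
        _ = (1 + 1/(p-1)) * (M:ℝ)^(1-p) := by ring
  have hnn : ∀ i : ℕ, 0 ≤ ((M:ℝ) + (i:ℝ))^(-p) := fun i => Real.rpow_nonneg (by positivity) _
  have hsummable : Summable (fun i : ℕ => ((M:ℝ) + (i:ℝ))^(-p)) :=
    summable_of_sum_range_le hnn partial_bound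
  exact ⟨hsummable, Summable.tsum_le_of_sum_range_le hsummable partial_bound⟩
lemma per_n (μ : Measure ℝ) (hpos : μ (Set.Ioi (0:ℝ)) ≠ 0)
    (hmom : ∀ ξ : ℝ, 0 ≤ ξ → IntegrableOn (fun r : ℝ => r ^ ξ) (Set.Ioi (0:ℝ)) μ)
    {β C₀ : ℝ} (R : ℕ) (hC₀ : 0 ≤ C₀) (hR : 4 ≤ (R:ℝ)) (hβ : 1/2 < β)
    (hbound : ∀ ξ : ℝ, (R:ℝ) ≤ ξ → |deriv (deriv (fun t => Real.log (mom μ t))) ξ| ≤ C₀ * ξ^(-β))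
    (n : ℤ) :
    Summable (fun m : ℕ => (1 - rho μ (m + n.toNat) (m + (-n).toNat))^2) ∧
    ∑' m : ℕ, (1 - rho μ (m + n.toNat) (m + (-n).toNat))^2
      ≤ ((2 + 1/(2*β-1)) * ((R:ℝ) + 2 + (C₀^2)^(1/(2*β))))
        * (1+|(n:ℝ)|)^(2 * max (1/2) (1/β)) := by
  have hβpos : 0 < β := by linarith
  set w : ℕ → ℝ := fun m => (1 - rho μ (m + n.toNat) (m + (-n).toNat))^2 with hw
  set p := 2*β with hpdef
  have hp : 1 < p := by rw [hpdef]; linarith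
  set A := C₀^2 * (n:ℝ)^4 with hA
  have hA0 : 0 ≤ A := by positivity
  set Q : ℕ := R + ⌈A^(1/p)⌉₊ + 1 with hQ
  have hQ1 : 1 ≤ Q := by omega
  have hRQ : R ≤ Q := by omega
  have hQpos : (0:ℝ) < (Q:ℝ) := by exact_mod_cast Nat.pos_of_ne_zero (by omega)
  have hAle : A^(1/p) ≤ (Q:ℝ) := by
    refine le_trans (Nat.le_ceil _) ?_
    exact_mod_cast Nat.cast_le.2 (show ⌈A^(1/p)⌉₊ ≤ Q by omega)
  have hp0 : p ≠ 0 := by linarith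
  have hAQ : A ≤ (Q:ℝ)^p := by
    calc A = A^((1/p)*p) := by rw [one_div_mul_cancel hp0, Real.rpow_one]
      _ = (A^(1/p))^p := Real.rpow_mul hA0 _ _
      _ ≤ (Q:ℝ)^p := Real.rpow_le_rpow (Real.rpow_nonneg hA0 _) hAle (by linarith)
  -- bounds on w
  have hw01 : ∀ m : ℕ, 0 ≤ 1 - rho μ (m + n.toNat) (m + (-n).toNat) ∧
      1 - rho μ (m + n.toNat) (m + (-n).toNat) ≤ 1 := by
    intro m
    constructor
    · linarith [rho_le_one μ hpos hmom (m + n.toNat) (m + (-n).toNat)]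
    · linarith [rho_pos μ hpos hmom (m + n.toNat) (m + (-n).toNat)]
  have hwnn : ∀ m : ℕ, 0 ≤ w m := fun m => sq_nonneg _
  have hwle1 : ∀ m : ℕ, w m ≤ 1 := by
    intro m
    rcases hw01 m with ⟨h0, h1⟩
    show (1 - rho μ (m + n.toNat) (m + (-n).toNat))^2 ≤ 1
    nlinarith
  -- tail bound
  have hwtail : ∀ i : ℕ, w (i + Q) ≤ A * ((Q:ℝ)+(i:ℝ))^(-p) := by
    intro i
    set m : ℕ := i + Q with hm
    set j : ℕ := m + n.toNat with hj
    set k : ℕ := m + (-n).toNat with hk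
    have hmpos : (0:ℝ) < (m:ℝ) := by
      have : 1 ≤ m := by omega
      exact_mod_cast Nat.pos_of_ne_zero (by omega)
    have hminm : m ≤ min j k := le_min (Nat.le_add_right _ _) (Nat.le_add_right _ _)
    have hmin_cast : (m:ℝ) ≤ ((min j k : ℕ):ℝ) := Nat.cast_le.2 hminm
    have h2m : (R:ℝ) ≤ 2 * ((min j k : ℕ):ℝ) := by
      have hRm : (R:ℝ) ≤ (m:ℝ) := by
        have : R ≤ m := by omega
        exact_mod_cast this
      linarith
    have hest := one_sub_rho_le μ hpos hmom hC₀ hR hβpos hbound h2m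
    have hjkz : (j:ℤ) - (k:ℤ) = n := by
      rw [hj, hk]
      push_cast
      omega
    have hjkr : (j:ℝ) - (k:ℝ) = (n:ℝ) := by
      have := congrArg (Int.cast : ℤ → ℝ) hjkz
      push_cast at this
      linarith
    rw [hjkr] at hest
    have hmono : ((min j k : ℕ):ℝ)^(-β) ≤ (m:ℝ)^(-β) :=
      Real.rpow_le_rpow_of_nonpos hmpos hmin_cast (by linarith)
    have hest2 : 1 - rho μ j k ≤ C₀ * (n:ℝ)^2 * (m:ℝ)^(-β) := by
      calc 1 - rho μ j k ≤ C₀ * (n:ℝ)^2 * ((min j k : ℕ):ℝ)^(-β) := hest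
        _ ≤ C₀ * (n:ℝ)^2 * (m:ℝ)^(-β) :=
            mul_le_mul_of_nonneg_left hmono (by positivity)
    have hsq : w (i + Q) ≤ (C₀ * (n:ℝ)^2 * (m:ℝ)^(-β))^2 := by
      show (1 - rho μ j k)^2 ≤ (C₀ * (n:ℝ)^2 * (m:ℝ)^(-β))^2
      have h0 : 0 ≤ 1 - rho μ j k := (hw01 (i+Q)).1
      exact pow_le_pow_left₀ h0 hest2 2
    refine le_trans hsq (le_of_eq ?_)
    have hcast : ((Q:ℝ)+(i:ℝ)) = (m:ℝ) := by rw [hm]; push_cast; ring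
    rw [hcast, hA]
    have hxx : ((m:ℝ)^(-β))^2 = (m:ℝ)^(-p) := by
      rw [← Real.rpow_natCast ((m:ℝ)^(-β)) 2, ← Real.rpow_mul hmpos.le]
      norm_num
      rw [hpdef]
      ring_nf
    rw [mul_pow, mul_pow, hxx]
    ring
  -- summability
  have htailS : Summable (fun i : ℕ => A * ((Q:ℝ)+(i:ℝ))^(-p)) :=
    (rpow_tail_bound hp Q hQ1).1.mul_left A
  have htailwS : Summable (fun i : ℕ => w (i + Q)) :=
    Summable.of_nonneg_of_le (fun i => hwnn _) hwtail htailS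
  have hSw : Summable w := (summable_nat_add_iff Q).1 htailwS
  refine ⟨hSw, ?_⟩
  -- tsum bound
  have hsplit := (Summable.sum_add_tsum_nat_add Q hSw).symm
  have hsum1 : ∑ i ∈ Finset.range Q, w i ≤ (Q:ℝ) := by
    calc ∑ i ∈ Finset.range Q, w i ≤ ∑ i ∈ Finset.range Q, 1 :=
          Finset.sum_le_sum fun i _ => hwle1 i
      _ = (Q:ℝ) := by simp
  have hsum2 : ∑' i : ℕ, w (i + Q) ≤ (1 + 1/(p-1)) * (Q:ℝ) := by
    calc ∑' i : ℕ, w (i + Q) ≤ ∑' i : ℕ, A * ((Q:ℝ)+(i:ℝ))^(-p) :=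
          Summable.tsum_le_tsum hwtail htailwS htailS
      _ = A * ∑' i : ℕ, ((Q:ℝ)+(i:ℝ))^(-p) := tsum_mul_left
      _ ≤ A * ((1 + 1/(p-1)) * (Q:ℝ)^(1-p)) := by
          refine mul_le_mul_of_nonneg_left ((rpow_tail_bound hp Q hQ1).2) hA0
      _ = (1 + 1/(p-1)) * (A * (Q:ℝ)^(1-p)) := by ring
      _ ≤ (1 + 1/(p-1)) * (Q:ℝ) := by
          refine mul_le_mul_of_nonneg_left ?_ (by
            have : 0 < p - 1 := by linarith
            positivity)
          calc A * (Q:ℝ)^(1-p) ≤ (Q:ℝ)^p * (Q:ℝ)^(1-p) :=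
                mul_le_mul_of_nonneg_right hAQ (Real.rpow_nonneg hQpos.le _)
            _ = (Q:ℝ) := by
                rw [← Real.rpow_add hQpos]
                norm_num
  have htot : ∑' m : ℕ, w m ≤ (2 + 1/(p-1)) * (Q:ℝ) := by
    rw [hsplit]
    linarith
  -- bound Q
  have hQbound : (Q:ℝ) ≤ (R:ℝ) + 2 + A^(1/p) := by
    rw [hQ]
    push_cast
    have := Nat.ceil_lt_add_one (Real.rpow_nonneg hA0 (1/p))
    linarith [this]
  -- A^(1/p) ≤ (C₀²)^(1/p) * (1+|n|)^(2σ)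
  set σ := max (1/2) (1/β) with hσ
  have h2σβ : 2/β ≤ 2*σ := by
    have : 1/β ≤ σ := le_max_right _ _
    calc 2/β = 2*(1/β) := by ring
      _ ≤ 2*σ := by linarith
  have hbase1 : (1:ℝ) ≤ 1 + |(n:ℝ)| := by
    have := abs_nonneg ((n:ℝ)); linarith
  have hone_le : (1:ℝ) ≤ (1+|(n:ℝ)|)^(2*σ) := by
    apply Real.one_le_rpow hbase1
    have : (1:ℝ)/2 ≤ σ := le_max_left _ _
    linarith
  have hApow : A^(1/p) ≤ (C₀^2)^(1/p) * (1+|(n:ℝ)|)^(2*σ) := by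
    rw [hA, Real.mul_rpow (by positivity) (by positivity)]
    refine mul_le_mul_of_nonneg_left ?_ (Real.rpow_nonneg (by positivity) _)
    have h1 : ((n:ℝ)^4)^(1/p) = |(n:ℝ)|^(4*(1/p)) := by
      rw [show ((n:ℝ))^4 = |(n:ℝ)|^4 by
        rw [pow_abs, _root_.abs_of_nonneg (by positivity : (0:ℝ) ≤ (n:ℝ)^4)]]
      rw [← Real.rpow_natCast |(n:ℝ)| 4, ← Real.rpow_mul (abs_nonneg _)]
      norm_num
    rw [h1]
    have h4p : 4*(1/p) = 2/β := by rw [hpdef]; field_simp; ring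
    rw [h4p]
    calc |(n:ℝ)|^(2/β) ≤ (1+|(n:ℝ)|)^(2/β) :=
          Real.rpow_le_rpow (abs_nonneg _) (by linarith) (by positivity)
      _ ≤ (1+|(n:ℝ)|)^(2*σ) := Real.rpow_le_rpow_of_exponent_le hbase1 h2σβ
  -- final chain
  have hcpos : (0:ℝ) < 2 + 1/(p-1) := by
    have : 0 < p - 1 := by linarith
    positivity
  calc ∑' m : ℕ, w m ≤ (2 + 1/(p-1)) * (Q:ℝ) := htot
    _ ≤ (2 + 1/(p-1)) * (((R:ℝ) + 2) + (C₀^2)^(1/p) * (1+|(n:ℝ)|)^(2*σ)) := by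
        refine mul_le_mul_of_nonneg_left ?_ hcpos.le
        calc (Q:ℝ) ≤ (R:ℝ) + 2 + A^(1/p) := hQbound
          _ ≤ ((R:ℝ) + 2) + (C₀^2)^(1/p) * (1+|(n:ℝ)|)^(2*σ) := by linarith [hApow]
    _ ≤ (2 + 1/(p-1)) * (((R:ℝ) + 2) * (1+|(n:ℝ)|)^(2*σ)
          + (C₀^2)^(1/p) * (1+|(n:ℝ)|)^(2*σ)) := by
        refine mul_le_mul_of_nonneg_left ?_ hcpos.le
        have hR2 : (0:ℝ) ≤ (R:ℝ) + 2 := by positivity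
        nlinarith [hone_le]
    _ = ((2 + 1/(2*β-1)) * ((R:ℝ) + 2 + (C₀^2)^(1/(2*β)))) * (1+|(n:ℝ)|)^(2*σ) := by
        rw [hpdef]
        ring
def pairEquiv : ℤ × ℕ ≃ ℕ × ℕ where
  toFun x := (x.2 + x.1.toNat, x.2 + (-x.1).toNat)
  invFun y := ((y.1:ℤ) - (y.2:ℤ), min y.1 y.2)
  left_inv := by
    rintro ⟨n, m⟩
    refine Prod.ext ?_ ?_ <;> simp <;> omega
  right_inv := by
    rintro ⟨j, k⟩
    refine Prod.ext ?_ ?_ <;> simp <;> omega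

/-- If `β > 1/2`, `(ln m_ξ)'' = O(ξ^{−β})` and `σ = max{1/2, 1/β}`, then there
is `C_μ > 0` such that for every `a ∈ Fℓ²_σ` the operator `K_μ(a)` is Hilbert–Schmidt:
`Σ_{j,k} |a_{j−k}|²(1−ρ_{j,k})² ≤ C_μ² ‖a‖²_{Fℓ²_σ}`. -/
theorem K_hilbert_schmidt
    (μ : Measure ℝ)
    (hsupp : μ (Set.Iic (0:ℝ)) = 0)
    (hpos : μ (Set.Ioi (0:ℝ)) ≠ 0)
    (hmom : ∀ ξ : ℝ, 0 ≤ ξ → IntegrableOn (fun r : ℝ => r ^ ξ) (Set.Ioi (0:ℝ)) μ)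
    (β : ℝ) (hβ : 1/2 < β)
    (hO : (fun ξ => deriv (deriv fun t => Real.log (mom μ t)) ξ)
            =O[atTop] fun ξ : ℝ => ξ ^ (-β))
    (σ : ℝ) (hσ : σ = max (1/2) (1/β)) :
    ∃ C : ℝ, 0 < C ∧ ∀ a : AddCircle (2 * Real.pi) → ℂ,
      Integrable a AddCircle.haarAddCircle →
      Summable (fun n : ℤ => ‖fourierCoeff a n‖^2 * (1 + |(n:ℝ)|) ^ (2*σ)) →
      Summable (fun p : ℕ × ℕ =>
          ‖fourierCoeff a ((p.1 : ℤ) - (p.2 : ℤ))‖^2 * (1 - rho μ p.1 p.2)^2) ∧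
      (∑' p : ℕ × ℕ, ‖fourierCoeff a ((p.1 : ℤ) - (p.2 : ℤ))‖^2 * (1 - rho μ p.1 p.2)^2)
        ≤ C^2 * ∑' n : ℤ, ‖fourierCoeff a n‖^2 * (1 + |(n:ℝ)|) ^ (2*σ) := by
  subst hσ
  -- extract the bound from hO
  obtain ⟨c, hc⟩ := Asymptotics.isBigO_iff.mp hO
  rw [Filter.eventually_atTop] at hc
  obtain ⟨R₀, hR₀⟩ := hc
  set C₀ : ℝ := max c 0 with hC₀def
  have hC₀ : 0 ≤ C₀ := le_max_right _ _
  set R : ℕ := ⌈max R₀ 4⌉₊ with hRdef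
  have hR4 : (4:ℝ) ≤ (R:ℝ) := le_trans (le_max_right _ _) (Nat.le_ceil _)
  have hbound : ∀ ξ : ℝ, (R:ℝ) ≤ ξ →
      |deriv (deriv (fun t => Real.log (mom μ t))) ξ| ≤ C₀ * ξ^(-β) := by
    intro ξ hξ
    have hξR₀ : R₀ ≤ ξ := le_trans (le_trans (le_max_left _ _) (Nat.le_ceil _)) hξ
    have hξpos : (0:ℝ) < ξ := by linarith
    have h := hR₀ ξ hξR₀
    rw [Real.norm_eq_abs, Real.norm_eq_abs,
      _root_.abs_of_nonneg (Real.rpow_nonneg hξpos.le _)] at h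
    refine le_trans h ?_
    apply mul_le_mul_of_nonneg_right (le_max_left _ _) (Real.rpow_nonneg hξpos.le _)
  -- the constant
  set C₁ : ℝ := (2 + 1/(2*β-1)) * ((R:ℝ) + 2 + (C₀^2)^(1/(2*β))) with hC₁def
  have hC₁pos : 0 < C₁ := by
    have h1 : (0:ℝ) < 2 + 1/(2*β-1) := by
      have : (0:ℝ) < 2*β - 1 := by linarith
      positivity
    have h2 : (0:ℝ) ≤ (C₀^2)^(1/(2*β)) := Real.rpow_nonneg (by positivity) _
    have h3 : (0:ℝ) < (R:ℝ) + 2 + (C₀^2)^(1/(2*β)) := by linarith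
    positivity
  refine ⟨Real.sqrt C₁, Real.sqrt_pos.2 hC₁pos, ?_⟩
  intro a _ hsum
  have hCsq : (Real.sqrt C₁)^2 = C₁ := Real.sq_sqrt hC₁pos.le
  set w : ℤ → ℕ → ℝ := fun n m => (1 - rho μ (m + n.toNat) (m + (-n).toNat))^2 with hwdef
  have hper := fun n : ℤ => per_n μ hpos hmom R hC₀ hR4 hβ hbound n
  set F : ℕ × ℕ → ℝ := fun p =>
    ‖fourierCoeff a ((p.1 : ℤ) - (p.2 : ℤ))‖^2 * (1 - rho μ p.1 p.2)^2 with hFdef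
  have hFe : ∀ x : ℤ × ℕ, F (pairEquiv x) = ‖fourierCoeff a x.1‖^2 * w x.1 x.2 := by
    rintro ⟨n, m⟩
    show ‖fourierCoeff a (((m + n.toNat : ℕ) : ℤ) - ((m + (-n).toNat : ℕ) : ℤ))‖^2
        * (1 - rho μ (m + n.toNat) (m + (-n).toNat))^2 = _
    have : (((m + n.toNat : ℕ) : ℤ) - ((m + (-n).toNat : ℕ) : ℤ)) = n := by
      push_cast; omega
    rw [this]
  have hFnn : ∀ p : ℕ × ℕ, 0 ≤ F p := fun p => by positivity
  -- summability of F ∘ pairEquiv over ℤ × ℕ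
  have hfiber : ∀ n : ℤ, Summable (fun m : ℕ => ‖fourierCoeff a n‖^2 * w n m) :=
    fun n => ((hper n).1).mul_left _
  have houter_le : ∀ n : ℤ, ∑' m : ℕ, ‖fourierCoeff a n‖^2 * w n m
      ≤ C₁ * (‖fourierCoeff a n‖^2 * (1 + |(n:ℝ)|) ^ (2 * max (1/2) (1/β))) := by
    intro n
    rw [tsum_mul_left]
    calc ‖fourierCoeff a n‖^2 * ∑' m, w n m
        ≤ ‖fourierCoeff a n‖^2 * (C₁ * (1 + |(n:ℝ)|) ^ (2 * max (1/2) (1/β))) :=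
          mul_le_mul_of_nonneg_left ((hper n).2) (by positivity)
      _ = C₁ * (‖fourierCoeff a n‖^2 * (1 + |(n:ℝ)|) ^ (2 * max (1/2) (1/β))) := by ring
  have houter_nn : ∀ n : ℤ, 0 ≤ ∑' m : ℕ, ‖fourierCoeff a n‖^2 * w n m :=
    fun n => tsum_nonneg (fun m => by positivity)
  have houterS : Summable (fun n : ℤ => ∑' m : ℕ, ‖fourierCoeff a n‖^2 * w n m) :=
    Summable.of_nonneg_of_le houter_nn houter_le (hsum.mul_left C₁)
  have hGS : Summable (F ∘ pairEquiv) := by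
    rw [show F ∘ pairEquiv = fun x : ℤ × ℕ => ‖fourierCoeff a x.1‖^2 * w x.1 x.2 from
      funext hFe]
    exact (summable_prod_of_nonneg (fun x => by positivity)).2 ⟨hfiber, houterS⟩
  have hFS : Summable F := (Equiv.summable_iff pairEquiv).1 hGS
  refine ⟨hFS, ?_⟩
  have htsum_eq : ∑' p : ℕ × ℕ, F p = ∑' x : ℤ × ℕ, F (pairEquiv x) :=
    (Equiv.tsum_eq pairEquiv F).symm
  calc ∑' p : ℕ × ℕ, F p = ∑' x : ℤ × ℕ, F (pairEquiv x) := htsum_eq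
    _ = ∑' x : ℤ × ℕ, ‖fourierCoeff a x.1‖^2 * w x.1 x.2 := by
        exact tsum_congr hFe
    _ = ∑' n : ℤ, ∑' m : ℕ, ‖fourierCoeff a n‖^2 * w n m := by
        refine Summable.tsum_prod' ?_ hfiber
        rw [show (fun x : ℤ × ℕ => ‖fourierCoeff a x.1‖^2 * w x.1 x.2) = F ∘ pairEquiv from
          (funext hFe).symm]
        exact hGS
    _ ≤ ∑' n : ℤ, C₁ * (‖fourierCoeff a n‖^2 * (1 + |(n:ℝ)|) ^ (2 * max (1/2) (1/β))) :=
        Summable.tsum_le_tsum houter_le houterS (hsum.mul_left C₁)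
    _ = C₁ * ∑' n : ℤ, ‖fourierCoeff a n‖^2 * (1 + |(n:ℝ)|) ^ (2 * max (1/2) (1/β)) :=
        tsum_mul_left
    _ = (Real.sqrt C₁)^2 * ∑' n : ℤ, ‖fourierCoeff a n‖^2
          * (1 + |(n:ℝ)|) ^ (2 * max (1/2) (1/β)) := by rw [hCsq]

end
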